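/- For 1 < q < 2 and any real numbers x, t with x·t ≠ 0 and R > 0: (1/R)∫_{-R}^{R} e_q^{i x ξ t} dξ = 2·sin_{1/(2-q)}(Rx(2-q)t) / (Rx(2-q)t), where e_q^{iu} denotes the q-exponential of a purely imaginary argument and sin_{q'} denotes the q'-sine function. -/

import Mathlib

open Complex intervalIntegral

/-- q-exponential of an imaginary argument: `e_q^{iu} = (1 + i(1-q) u)^{1/(1-q)}`
(principal branch). -/
noncomputable def qExpI (q u : ℝ) : ℂ :=
  (1 + Complex.I * ((1 : ℂ) - (q : ℂ)) * (u : ℂ)) ^ ((1 : ℂ) / (1 - (q : ℂ)))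

/-- q-sine: `sin_q(u) = Im(e_q^{iu})`. -/
noncomputable def qSin (q u : ℝ) : ℝ := (qExpI q u).im

theorem stmt_15 (q : ℝ) (hq1 : 1 < q) (hq2 : q < 2) (x t R : ℝ) (hxt : x * t ≠ 0)
    (hR : 0 < R) :
    (1 / R : ℂ) * ∫ ξ in (-R)..R, qExpI q (x * ξ * t) =
      ((2 * qSin (1 / (2 - q)) (R * x * (2 - q) * t) / (R * x * (2 - q) * t) : ℝ) : ℂ) := by
  have h1q : (1:ℝ) - q ≠ 0 := by linarith
  have h2q : (0:ℝ) < 2 - q := by linarith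
  have h2q' : (2:ℝ) - q ≠ 0 := ne_of_gt h2q
  have hRne : R ≠ 0 := ne_of_gt hR
  have h1qc : (1:ℂ) - (q:ℂ) ≠ 0 := by
    simpa using (Complex.ofReal_ne_zero.mpr h1q)
  have h2qc : (2:ℂ) - (q:ℂ) ≠ 0 := by
    simpa using (Complex.ofReal_ne_zero.mpr h2q')
  set a : ℝ := (1 - q) * (x * t) with ha
  have hane : a ≠ 0 := mul_ne_zero h1q hxt
  have hanec : (a:ℂ) ≠ 0 := Complex.ofReal_ne_zero.mpr hane
  set c : ℂ := 1 / (1 - (q:ℂ)) with hc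
  have hc1 : c + 1 = ((2:ℂ) - q)/(1 - q) := by
    rw [hc]; field_simp; ring
  have hc1ne : c + 1 ≠ 0 := by
    rw [hc1]; exact div_ne_zero h2qc h1qc
  have hslit : ∀ ξ : ℝ, (1 + Complex.I * a * ξ) ∈ Complex.slitPlane := by
    intro ξ
    rw [Complex.mem_slitPlane_iff]
    left; simp
  -- rewrite the integrand
  have hintg : ∀ ξ : ℝ, qExpI q (x * ξ * t) = (1 + Complex.I * a * ξ) ^ c := by
    intro ξ
    unfold qExpI
    rw [hc]
    congr 1
    rw [ha]
    push_cast
    ring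
  -- derivative of the antiderivative
  have key : ∀ ξ : ℝ, HasDerivAt
      (fun ξ : ℝ => (1 + Complex.I * a * ξ) ^ (c + 1) / ((c + 1) * (Complex.I * a)))
      ((1 + Complex.I * a * ξ) ^ c) ξ := by
    intro ξ
    have hbaseC : HasDerivAt (fun z : ℂ => 1 + Complex.I * a * z) (Complex.I * a) (ξ:ℂ) := by
      simpa using ((hasDerivAt_id (ξ:ℂ)).const_mul (Complex.I * a)).const_add 1
    have hpow : HasDerivAt (fun z : ℂ => (1 + Complex.I * a * z) ^ (c + 1))
        ((c + 1) * (1 + Complex.I * a * ξ) ^ (c + 1 - 1) * (Complex.I * a)) (ξ:ℂ) :=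
      hbaseC.cpow_const (hslit ξ)
    have := (hpow.comp_ofReal).div_const ((c + 1) * (Complex.I * a))
    convert this using 1
    have hIa : (Complex.I * a) ≠ 0 := mul_ne_zero Complex.I_ne_zero hanec
    case e'_4 => rfl
    rw [add_sub_cancel_right, mul_right_comm (c + 1), mul_div_right_comm ((c + 1) * (Complex.I * a)),
      div_self (mul_ne_zero hc1ne (mul_ne_zero Complex.I_ne_zero hanec)), one_mul]
  -- continuity of integrand
  have hcont : Continuous fun ξ : ℝ => (1 + Complex.I * a * ξ) ^ c := by
    apply continuous_iff_continuousAt.2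
    intro ξ
    refine ContinuousAt.cpow ?_ continuousAt_const (hslit ξ)
    exact Continuous.continuousAt (by continuity)
  have hint : ∫ ξ in (-R)..R, qExpI q (x * ξ * t)
      = (1 + Complex.I * a * R) ^ (c + 1) / ((c + 1) * (Complex.I * a))
        - (1 + Complex.I * a * (-R:ℝ)) ^ (c + 1) / ((c + 1) * (Complex.I * a)) := by
    rw [show (fun ξ : ℝ => qExpI q (x * ξ * t)) = fun ξ : ℝ => (1 + Complex.I * a * (ξ:ℂ)) ^ c from
      funext hintg]
    exact intervalIntegral.integral_eq_sub_of_hasDerivAt (fun ξ _ => key ξ)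
      (hcont.intervalIntegrable _ _)
  -- identify the RHS q-sine
  have hA : qExpI (1 / (2 - q)) (R * x * (2 - q) * t) = (1 + Complex.I * a * R) ^ (c + 1) := by
    unfold qExpI
    rw [hc1]
    have h1 : (1:ℂ) - ((1 / (2 - q) : ℝ) : ℂ) = (1 - q) / (2 - q) := by
      push_cast; field_simp; ring
    rw [h1]
    congr 1
    · rw [ha]; push_cast; field_simp
    · rw [one_div_div]
  -- conjugation
  have hconj : (1 + Complex.I * a * (-R:ℝ)) ^ (c + 1)
      = (starRingEnd ℂ) ((1 + Complex.I * a * R) ^ (c + 1)) := by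
    have harg : (1 + Complex.I * a * R : ℂ).arg ≠ Real.pi := by
      have := Complex.mem_slitPlane_iff_arg.mp (hslit R)
      intro h
      rw [h] at this
      exact this.1 rfl
    have hb : (1 + Complex.I * a * (-R:ℝ) : ℂ) = (starRingEnd ℂ) (1 + Complex.I * a * R) := by
      push_cast
      simp [Complex.ext_iff]
    have hcc : (starRingEnd ℂ) (c + 1) = c + 1 := by
      rw [hc1, map_div₀, map_sub, map_sub, map_one, Complex.conj_ofReal, map_ofNat]
    rw [hb, Complex.conj_cpow _ _ harg, hcc]
  -- final algebra
  rw [hint, hconj]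
  unfold qSin
  rw [hA]
  set A : ℂ := (1 + Complex.I * a * R) ^ (c + 1) with hAdef
  have hsub : A - (starRingEnd ℂ) A = (2 * A.im : ℝ) * Complex.I := Complex.sub_conj A
  have hx0 : x ≠ 0 := fun h => hxt (by rw [h]; ring)
  have ht0 : t ≠ 0 := fun h => hxt (by rw [h]; ring)
  have hxc : (x:ℂ) ≠ 0 := Complex.ofReal_ne_zero.mpr hx0
  have htc : (t:ℂ) ≠ 0 := Complex.ofReal_ne_zero.mpr ht0
  have hRc : (R:ℂ) ≠ 0 := Complex.ofReal_ne_zero.mpr hRne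
  have hden : (c + 1) * (Complex.I * (a:ℂ)) = Complex.I * (((2:ℂ) - q) * x * t) := by
    rw [hc1, ha]
    push_cast
    field_simp
  rw [div_sub_div_same, hsub, hden, mul_comm Complex.I (((2:ℂ) - q) * x * t),
    mul_div_mul_right _ _ Complex.I_ne_zero]
  push_cast
  field_simp
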